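/- Let G = (C₂)³ ⋊ C₇ be the Frobenius group built from the field F₈ (SmallGroup(56,11)) and let H be its Frobenius complement of order 7. Then ψ_H(G) / ψ_{H₇}(C₅₆) = 45/43 > 1, where H₇ is the unique subgroup of order 7 of C₅₆. -/

import Mathlib

open Finset

/-- The order of `x` relative to the subgroup `H`: the least positive `m` with `x ^ m ∈ H`. -/
noncomputable def relOrder {G : Type*} [Group G] (H : Subgroup G) (x : G) : ℕ :=
  sInf {m : ℕ | 0 < m ∧ x ^ m ∈ H}

/-- `ψ_H(G)`, the sum of element orders of `G` relative to the subgroup `H`. -/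
noncomputable def psiRel (G : Type*) [Group G] [Fintype G] (H : Subgroup G) : ℕ :=
  ∑ x : G, relOrder H x

/-- `ψ(G)`, the sum of element orders of `G`. -/
noncomputable def psi (G : Type*) [Group G] [Fintype G] : ℕ :=
  ∑ x : G, orderOf x

/-- The action of the multiplicative group of a field `F` on the additive group of `F`
(written multiplicatively), by field multiplication. -/
def fieldMulAction (F : Type*) [Field F] : Fˣ →* MulAut (Multiplicative F) where
  toFun u :=
    { toFun := fun x => Multiplicative.ofAdd (u • x.toAdd)
      invFun := fun x => Multiplicative.ofAdd (u⁻¹ • x.toAdd)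
      left_inv := fun x => by simp
      right_inv := fun x => by simp
      map_mul' := fun x y => by
        simp [← ofAdd_add, smul_add] }
  map_one' := by
    ext x; simp
  map_mul' := fun u v => by
    ext x; simp [mul_smul]

instance semidirectFintype {N G : Type*} [Group N] [Group G] [Fintype N] [Fintype G]
    (φ : G →* MulAut N) : Fintype (N ⋊[φ] G) :=
  Fintype.ofEquiv (N × G)
    { toFun := fun p => ⟨p.1, p.2⟩
      invFun := fun g => (g.1, g.2)
      left_inv := fun _ => rfl
      right_inv := fun _ => rfl }

/-- The Frobenius group `F ⋊ Fˣ` built from a field `F`. -/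
abbrev frobGroup (F : Type*) [Field F] := Multiplicative F ⋊[fieldMulAction F] Fˣ

/-- The Frobenius complement: the copy of `Fˣ` inside `frobGroup F`. -/
abbrev frobComplement (F : Type*) [Field F] : Subgroup (frobGroup F) :=
  (SemidirectProduct.inr : Fˣ →* frobGroup F).range

set_option linter.unusedSectionVars false

lemma relOrder_eq {G : Type*} [Group G] (H : Subgroup G) (x : G) (n : ℕ) (hn : 0 < n)
    (hmem : x ^ n ∈ H) (hmin : ∀ m, 0 < m → x ^ m ∈ H → n ≤ m) : relOrder H x = n := by
  have hne : {m : ℕ | 0 < m ∧ x ^ m ∈ H}.Nonempty := ⟨n, hn, hmem⟩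
  have h1 := Nat.sInf_mem hne
  exact le_antisymm (Nat.sInf_le ⟨hn, hmem⟩) (hmin _ h1.1 h1.2)

def K56 : Subgroup (Multiplicative (ZMod 56)) where
  carrier := {x | x ^ 7 = 1}
  one_mem' := one_pow 7
  mul_mem' := by intro a b ha hb; simp only [Set.mem_setOf_eq] at *; rw [mul_pow, ha, hb, mul_one]
  inv_mem' := by intro a ha; simp only [Set.mem_setOf_eq] at *; rw [inv_pow, ha, inv_one]

lemma mem_K56 (x : Multiplicative (ZMod 56)) : x ∈ K56 ↔ x ^ 7 = 1 := Iff.rfl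

instance : DecidablePred (· ∈ K56) := fun x =>
  decidable_of_iff ((7 : ℕ) • x.toAdd = 0) (by
    simp only [mem_K56]
    constructor
    · intro h; exact (Multiplicative.toAdd).injective (by simpa using h)
    · intro h; simpa using congrArg Multiplicative.toAdd h)

lemma card_K56 : Nat.card K56 = 7 := by
  rw [Nat.card_eq_fintype_card]; decide

lemma H7_eq (H7 : Subgroup (Multiplicative (ZMod 56))) (hH7 : Nat.card H7 = 7) : H7 = K56 := by
  apply Subgroup.eq_of_le_of_card_ge
  · intro h hh
    rw [mem_K56]
    have := pow_card_eq_one' (G := H7) (x := ⟨h, hh⟩)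
    rw [hH7] at this
    exact congrArg Subtype.val this
  · rw [card_K56, hH7]

lemma relOrder_K56 (x : Multiplicative (ZMod 56)) :
    relOrder K56 x = orderOf x / Nat.gcd (orderOf x) 7 := by
  set d := orderOf x with hd
  have hd0 : 0 < d := orderOf_pos x
  have hg0 : 0 < Nat.gcd d 7 := Nat.gcd_pos_of_pos_left 7 hd0
  have hgd : Nat.gcd d 7 ∣ d := Nat.gcd_dvd_left d 7
  have hg7 : Nat.gcd d 7 ∣ 7 := Nat.gcd_dvd_right d 7
  set g := Nat.gcd d 7 with hgdef
  set k := d / g with hk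
  obtain ⟨t, ht⟩ := hg7
  have hdk : g * k = d := Nat.mul_div_cancel' hgd
  have hmemiff : ∀ m : ℕ, (x ^ m ∈ K56 ↔ d ∣ 7 * m) := by
    intro m
    rw [mem_K56, ← pow_mul, ← orderOf_dvd_iff_pow_eq_one, ← hd, mul_comm]
  apply relOrder_eq
  · exact Nat.div_pos (Nat.le_of_dvd hd0 hgd) hg0
  · rw [hmemiff]
    refine ⟨t, ?_⟩
    rw [ht, ← hdk]; ring
  · intro m hm hxm
    rw [hmemiff] at hxm
    have hktm : k ∣ t * m := by
      have : g * k ∣ g * (t * m) := by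
        rw [hdk, ht] at *
        convert hxm using 1; ring
      exact (Nat.mul_dvd_mul_iff_left hg0).mp this
    have hco : Nat.Coprime k t := by
      have := Nat.coprime_div_gcd_div_gcd (m := d) (n := 7) hg0
      have ht' : t = 7 / g := by rw [ht]; exact (Nat.mul_div_cancel_left t hg0).symm
      rw [ht']; exact this
    exact Nat.le_of_dvd hm (hco.dvd_of_dvd_mul_left hktm)

lemma psi_zmod : (∑ x : Multiplicative (ZMod 56), relOrder K56 x) = 301 := by
  have : ∀ x : Multiplicative (ZMod 56), relOrder K56 x =
      (56 / Nat.gcd 56 x.toAdd.val) / Nat.gcd (56 / Nat.gcd 56 x.toAdd.val) 7 := by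
    intro x
    have hx : x = Multiplicative.ofAdd ((x.toAdd.val : ℕ) : ZMod 56) := by
      simp [ZMod.natCast_val, ZMod.cast_id]
    have horder : orderOf x = 56 / Nat.gcd 56 x.toAdd.val := by
      conv_lhs => rw [hx]
      rw [orderOf_ofAdd_eq_addOrderOf, ZMod.addOrderOf_coe _ (by norm_num)]
    rw [relOrder_K56, horder]
  simp only [this]
  decide

section Frob
variable {F : Type*} [Field F]


lemma mem_frobComplement (g : frobGroup F) : g ∈ frobComplement F ↔ g.left = 1 := by
  constructor
  · rintro ⟨u, rfl⟩; rfl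
  · intro h
    exact ⟨g.right, by ext <;> simp [h]⟩

lemma fieldMulAction_apply (u : Fˣ) (x : Multiplicative F) :
    fieldMulAction F u x = Multiplicative.ofAdd ((u : F) * x.toAdd) := rfl

lemma frob_pow_left (n : Multiplicative F) (u : Fˣ) (m : ℕ) :
    ((⟨n, u⟩ : frobGroup F) ^ m) =
      ⟨Multiplicative.ofAdd ((∑ i ∈ Finset.range m, (u : F) ^ i) * n.toAdd), u ^ m⟩ := by
  induction m with
  | zero => ext <;> simp
  | succ m ih =>
    rw [pow_succ, ih]
    ext
    · show _ * (fieldMulAction F (u ^ m)) n = _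
      rw [fieldMulAction_apply]
      show Multiplicative.ofAdd _ * Multiplicative.ofAdd _ = Multiplicative.ofAdd _
      rw [← ofAdd_add, Finset.sum_range_succ]
      congr 1
      push_cast
      ring_nf; rfl
    · show (((u ^ m * u : Fˣ) : F)) = ((u ^ (m+1) : Fˣ) : F)
      rw [pow_succ]

variable [Fintype F] [DecidableEq F]

lemma two_eq_zero (hF : Fintype.card F = 8) : (2 : F) = 0 := by
  have h8 : ((8 : ℕ) : F) = 0 := by
    have h := FiniteField.cast_card_eq_zero F
    rwa [hF] at h
  have : (2 : F) ^ 3 = 0 := by push_cast at h8; linear_combination h8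
  exact pow_eq_zero_iff (by norm_num) |>.mp this

lemma relOrder_frob (hF : Fintype.card F = 8) (n : Multiplicative F) (u : Fˣ) :
    relOrder (frobComplement F) (⟨n, u⟩ : frobGroup F) =
      if n = 1 then 1 else if u = 1 then 2 else 7 := by
  have hcard : Fintype.card Fˣ = 7 := by rw [Fintype.card_units, hF]
  by_cases hn : n = 1
  · subst hn
    simp only [if_pos rfl]
    apply relOrder_eq _ _ 1 one_pos
    · rw [pow_one, mem_frobComplement]
    · intro m hm _; exact hm
  · rw [if_neg hn]
    have hnA : n.toAdd ≠ 0 := fun h => hn ((Multiplicative.toAdd).injective (by simpa using h))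
    by_cases hu : u = 1
    · subst hu
      rw [if_pos rfl]
      apply relOrder_eq _ _ 2 two_pos
      · rw [frob_pow_left, mem_frobComplement]
        show Multiplicative.ofAdd _ = 1
        rw [ofAdd_eq_one]
        have : (∑ i ∈ Finset.range 2, ((1 : Fˣ) : F) ^ i) = 2 := by norm_num
        rw [this, two_eq_zero hF, zero_mul]
      · intro m hm hmem
        by_contra hlt
        interval_cases m
        · rw [frob_pow_left, mem_frobComplement] at hmem
          simp only at hmem
          rw [show Multiplicative.ofAdd _ = (1 : Multiplicative F) ↔ _ from ofAdd_eq_one] at hmem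
          simp at hmem
          exact hnA hmem
    · rw [if_neg hu]
      have huF : ((u : F)) ≠ 1 := fun h => hu (Units.ext (by simpa using h))
      have hord : orderOf u = 7 := by
        have hdvd : orderOf u ∣ 7 := hcard ▸ orderOf_dvd_card
        rcases Nat.Prime.eq_one_or_self_of_dvd (by norm_num) _ hdvd with h1 | h7
        · exact absurd (orderOf_eq_one_iff.mp h1) hu
        · exact h7
      have hgeom : ∀ m : ℕ, (∑ i ∈ Finset.range m, (u : F) ^ i) = ((u : F) ^ m - 1) / ((u : F) - 1) :=
        fun m => geom_sum_eq huF m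
      apply relOrder_eq _ _ 7 (by norm_num)
      · rw [frob_pow_left, mem_frobComplement]
        show Multiplicative.ofAdd _ = 1
        rw [ofAdd_eq_one, hgeom]
        have hu7 : (u : F) ^ 7 = 1 := by
          have h7 : u ^ 7 = 1 := by rw [← hord]; exact pow_orderOf_eq_one u
          have := congrArg (Units.val) h7
          simpa using this
        rw [hu7, sub_self, zero_div, zero_mul]
      · intro m hm hmem
        by_contra hlt
        push_neg at hlt
        rw [frob_pow_left, mem_frobComplement] at hmem
        simp only at hmem
        rw [show Multiplicative.ofAdd _ = (1 : Multiplicative F) ↔ _ from ofAdd_eq_one] at hmem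
        rcases mul_eq_zero.mp hmem with hs | hn0
        · rw [hgeom, div_eq_zero_iff] at hs
          rcases hs with hs | hs
          · have : (u : F) ^ m = 1 := by linear_combination hs
            have : u ^ m = 1 := Units.ext (by push_cast; simpa using this)
            have h7m := hord ▸ orderOf_dvd_of_pow_eq_one this
            omega
          · exact huF (by linear_combination hs)
        · exact hnA hn0


lemma psi_frob (hF : Fintype.card F = 8) :
    psiRel (frobGroup F) (frobComplement F) = 315 := by
  classical
  have hcardU : Fintype.card Fˣ = 7 := by rw [Fintype.card_units, hF]
  have hcardM : Fintype.card (Multiplicative F) = 8 := by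
    rw [Fintype.card_multiplicative, hF]
  have hbij : Function.Bijective
      (fun p : Multiplicative F × Fˣ => (⟨p.1, p.2⟩ : frobGroup F)) := by
    exact Equiv.bijective
      ({ toFun := fun p => ⟨p.1, p.2⟩
         invFun := fun g => (g.1, g.2)
         left_inv := fun _ => rfl
         right_inv := fun _ => rfl } : Multiplicative F × Fˣ ≃ frobGroup F)
  rw [psiRel, ← Fintype.sum_bijective _ hbij _ _ (fun p => rfl)]
  have : ∀ p : Multiplicative F × Fˣ,
      relOrder (frobComplement F) (⟨p.1, p.2⟩ : frobGroup F) =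
        if p.1 = 1 then 1 else if p.2 = 1 then 2 else 7 := fun p => relOrder_frob hF p.1 p.2
  simp only [this]
  rw [Fintype.sum_prod_type]
  have hinner : ∀ n : Multiplicative F,
      (∑ u : Fˣ, if n = 1 then 1 else if u = 1 then 2 else 7) =
        if n = 1 then 7 else 44 := by
    intro n
    by_cases hn : n = 1
    · simp [hn, Finset.card_univ, hcardU]
    · simp only [if_neg hn]
      rw [Finset.sum_ite, Finset.sum_const, Finset.sum_const]
      rw [Finset.filter_eq', if_pos (Finset.mem_univ 1), Finset.filter_ne']
      rw [Finset.card_erase_of_mem (Finset.mem_univ 1), Finset.card_singleton,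
        Finset.card_univ, hcardU]
      norm_num
  simp only [hinner]
  rw [Finset.sum_ite, Finset.sum_const, Finset.sum_const]
  rw [Finset.filter_eq', if_pos (Finset.mem_univ 1), Finset.filter_ne']
  rw [Finset.card_erase_of_mem (Finset.mem_univ 1), Finset.card_singleton,
    Finset.card_univ, hcardM]
  norm_num

end Frob

theorem psiRel_frobenius_56 (F : Type*) [Field F] [Fintype F] [DecidableEq F] (hF : Fintype.card F = 8)
    (H7 : Subgroup (Multiplicative (ZMod 56))) (hH7 : Nat.card H7 = 7) :
    (psiRel (frobGroup F) (frobComplement F) : ℚ) /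
        (psiRel (Multiplicative (ZMod 56)) H7 : ℚ) = 45 / 43 ∧ (45 : ℚ) / 43 > 1 := by
  constructor
  · have h1 : psiRel (frobGroup F) (frobComplement F) = 315 := psi_frob hF
    have h2 : psiRel (Multiplicative (ZMod 56)) H7 = 301 := by
      rw [psiRel, H7_eq H7 hH7]; exact psi_zmod
    rw [h1, h2]; norm_num
  · norm_num
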